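/- If a Hausdorff locally compact semitopological semigroup structure on $S^0$ (the semigroup $\mathscr{S}_n\ltimes(\mathbb{N}\times\mathbb{N})^n$ with adjoined zero) is not discrete, then its topology coincides with the one-point compactification topology: points of $S$ are isolated and neighbourhoods of $0$ are exactly the cofinite sets containing $0$. Consequently, every Hausdorff locally compact semitopological topology on $S^0$ is either discrete or compact. -/

import Mathlib

/-- Elements of the semigroup `S = 𝒮ₙ ⋉ (ℕ × ℕ)ⁿ`: a permutation of
`{1,…,n}` together with a pair of tuples of positive integers. -/
abbrev Gel (n : ℕ) := Equiv.Perm (Fin n) × (Fin n → ℕ+) × (Fin n → ℕ+)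

/-- The right action of a permutation on tuples: `((x)σ)_i = x_{σ⁻¹(i)}`. -/
def ract {n : ℕ} (σ : Equiv.Perm (Fin n)) (x : Fin n → ℕ+) : Fin n → ℕ+ :=
  fun i => x (σ.symm i)

/-- The semidirect product operation
`(α,[x,y])·(β,[u,v]) = (α∘β, [(x)β + max{(y)β,u} - (y)β, v + max{(y)β,u} - u])`,
where `α∘β` is the composition of the permutations acting on the right
(first `α`, then `β`) and max and subtraction are coordinatewise. -/
def gmul {n : ℕ} (a b : Gel n) : Gel n :=
  (b.1 * a.1,
   fun i => ract b.1 a.2.1 i + max (ract b.1 a.2.2 i) (b.2.1 i) - ract b.1 a.2.2 i,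
   fun i => b.2.2 i + max (ract b.1 a.2.2 i) (b.2.1 i) - b.2.1 i)

/-- The semigroup with adjoined zero: `none` is the zero. -/
def gmul0 {n : ℕ} : Option (Gel n) → Option (Gel n) → Option (Gel n)
  | some a, some b => some (gmul a b)
  | _, _ => none

namespace GelD

variable {n : ℕ}

private lemma pq {a b : ℕ+} (h : (a:ℕ) = (b:ℕ)) : a = b := PNat.coe_injective h

lemma pac (a b : ℕ+) : ((a+b:ℕ+):ℕ) = (a:ℕ)+(b:ℕ) := rfl
lemma p1c : ((1:ℕ+):ℕ) = 1 := rfl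
lemma p2c : ((2:ℕ+):ℕ) = 2 := rfl

lemma ppos (a : ℕ+) : 1 ≤ (a:ℕ) := by exact_mod_cast a.one_le

lemma psub_coe (a b : ℕ+) (h : (b:ℕ) < (a:ℕ)) : ((a - b : ℕ+):ℕ) = (a:ℕ) - (b:ℕ) := by
  rw [PNat.sub_coe, if_pos (by exact_mod_cast h)]

lemma padd_sub (a b : ℕ+) : a + b - b = a := by
  apply pq
  rw [psub_coe _ _ (by simp only [pac]; have := ppos a; omega)]
  simp only [pac]; omega

lemma padd_sub_left (a b : ℕ+) : a + b - a = b := by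
  rw [add_comm]; exact padd_sub b a

lemma pmax_one (a : ℕ+) : max a 1 = a := max_eq_left a.one_le

lemma pmax_one' (a : ℕ+) : max 1 a = a := max_eq_right a.one_le

def onev : Fin n → ℕ+ := fun _ => 1

def constv (k : ℕ+) : Fin n → ℕ+ := fun _ => k

def bumpv (j : Fin n) : Fin n → ℕ+ := fun i => if i = j then 2 else 1

def bumpK (k : ℕ+) (j : Fin n) : Fin n → ℕ+ := fun i => if i = j then k+1 else k

def oneG : Gel n := (1, onev, onev)

def eK (k : ℕ+) : Gel n := (1, constv k, constv k)

def eKi (k : ℕ+) (i₀ : Fin n) : Gel n := (1, bumpK k i₀, bumpK k i₀)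

lemma ract_one (x : Fin n → ℕ+) : ract (1 : Equiv.Perm (Fin n)) x = x := by
  funext i; simp [ract]; rfl

lemma gmul0_ss (a b : Gel n) : gmul0 (some a) (some b) = some (gmul a b) := rfl

lemma gmul0_none_left (x : Option (Gel n)) : gmul0 none x = none := rfl

lemma gmul0_none_right (x : Option (Gel n)) : gmul0 x none = none := by
  cases x <;> rfl

/-! ### multiplication identities -/

lemma gmul_one (t : Gel n) : gmul t oneG = t := by
  unfold gmul oneG
  refine Prod.ext ?_ (Prod.ext ?_ ?_)
  · simp
  · funext i
    simp only [ract_one, onev]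
    rw [pmax_one, padd_sub]
  · funext i
    simp only [ract_one, onev]
    rw [pmax_one, padd_sub_left]

lemma one_gmul (t : Gel n) : gmul oneG t = t := by
  unfold gmul oneG
  refine Prod.ext ?_ (Prod.ext ?_ ?_)
  · simp
  · funext i
    simp only [ract, onev]
    rw [pmax_one', padd_sub_left]
  · funext i
    simp only [ract, onev]
    rw [pmax_one', padd_sub]

lemma gmul_vup (t : Gel n) (j : Fin n) :
    gmul t (1, onev, bumpv j) =
      (t.1, t.2.1, fun i => if i = j then t.2.2 i + 1 else t.2.2 i) := by
  unfold gmul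
  refine Prod.ext ?_ (Prod.ext ?_ ?_)
  · simp
  · funext i
    simp only [ract_one, onev]
    rw [pmax_one, padd_sub]
  · funext i
    simp only [ract_one, onev]
    rw [pmax_one]
    simp only [bumpv]
    by_cases h : i = j
    · rw [if_pos h, if_pos h]
      apply pq
      rw [psub_coe _ _ (by simp only [pac, p1c, p2c]; have := ppos (t.2.2 i); omega)]
      simp only [pac, p1c, p2c]; omega
    · rw [if_neg h, if_neg h, padd_sub_left]

lemma gmul_vdn (t : Gel n) (j : Fin n) (h2 : 2 ≤ t.2.2 j) :
    gmul t (1, bumpv j, onev) =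
      (t.1, t.2.1, fun i => if i = j then t.2.2 i - 1 else t.2.2 i) := by
  unfold gmul
  have hmax : ∀ i, max (t.2.2 i) (bumpv j i) = t.2.2 i := by
    intro i
    apply max_eq_left
    simp only [bumpv]
    by_cases h : i = j
    · rw [if_pos h, h]; exact h2
    · rw [if_neg h]; exact (t.2.2 i).one_le
  refine Prod.ext ?_ (Prod.ext ?_ ?_)
  · simp
  · funext i
    simp only [ract_one]
    rw [hmax, padd_sub]
  · funext i
    simp only [ract_one, onev]
    rw [hmax]
    simp only [bumpv]
    by_cases h : i = j
    · rw [if_pos h, if_pos h]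
      have h2' : (2:ℕ) ≤ (t.2.2 i : ℕ) := by rw [h]; exact_mod_cast h2
      apply pq
      rw [psub_coe _ _ (by simp only [pac, p1c, p2c]; omega),
          psub_coe _ _ (by simp only [p1c]; omega)]
      simp only [pac, p1c, p2c]; omega
    · rw [if_neg h, if_neg h, padd_sub_left]

lemma gmul_perm (t : Gel n) (δ : Equiv.Perm (Fin n)) :
    gmul t (δ, onev, onev) =
      (δ * t.1, fun i => t.2.1 (δ.symm i), fun i => t.2.2 (δ.symm i)) := by
  unfold gmul
  refine Prod.ext ?_ (Prod.ext ?_ ?_)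
  · rfl
  · funext i
    simp only [ract, onev]
    rw [pmax_one, padd_sub]
  · funext i
    simp only [ract, onev]
    rw [pmax_one, padd_sub_left]

lemma symm_apply_iff (σ : Equiv.Perm (Fin n)) (i i₀ : Fin n) :
    σ.symm i = i₀ ↔ i = σ i₀ := by
  constructor
  · intro h; rw [← h]; simp
  · intro h; rw [h]; simp

lemma gmul_uup (t : Gel n) (i₀ : Fin n) :
    gmul (1, bumpv i₀, onev) t =
      (t.1, fun i => if i = t.1 i₀ then t.2.1 i + 1 else t.2.1 i, t.2.2) := by
  unfold gmul
  refine Prod.ext ?_ (Prod.ext ?_ ?_)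
  · simp
  · funext i
    simp only [ract, onev]
    rw [pmax_one']
    simp only [bumpv]
    by_cases h : i = t.1 i₀
    · rw [if_pos ((symm_apply_iff t.1 i i₀).mpr h), if_pos h]
      apply pq
      rw [psub_coe _ _ (by simp only [pac, p1c, p2c]; have := ppos (t.2.1 i); omega)]
      simp only [pac, p1c, p2c]; omega
    · rw [if_neg (fun hc => h ((symm_apply_iff t.1 i i₀).mp hc)), if_neg h, padd_sub_left]
  · funext i
    simp only [ract, onev]
    rw [pmax_one', padd_sub]

lemma gmul_udn (t : Gel n) (i₀ : Fin n) (h2 : 2 ≤ t.2.1 (t.1 i₀)) :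
    gmul (1, onev, bumpv i₀) t =
      (t.1, fun i => if i = t.1 i₀ then t.2.1 i - 1 else t.2.1 i, t.2.2) := by
  unfold gmul
  have hmax : ∀ i, max (bumpv i₀ (t.1.symm i)) (t.2.1 i) = t.2.1 i := by
    intro i
    apply max_eq_right
    simp only [bumpv]
    by_cases h : t.1.symm i = i₀
    · rw [if_pos h]
      have hi : i = t.1 i₀ := (symm_apply_iff t.1 i i₀).mp h
      rw [hi]; exact h2
    · rw [if_neg h]; exact (t.2.1 i).one_le
  refine Prod.ext ?_ (Prod.ext ?_ ?_)
  · simp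
  · funext i
    simp only [ract, onev]
    rw [hmax]
    simp only [bumpv]
    by_cases h : i = t.1 i₀
    · rw [if_pos ((symm_apply_iff t.1 i i₀).mpr h)]
      have h2' : (2:ℕ) ≤ (t.2.1 i : ℕ) := by rw [h]; exact_mod_cast h2
      rw [if_pos h]
      apply pq
      rw [psub_coe _ _ (by simp only [pac, p1c, p2c]; omega),
          psub_coe _ _ (by simp only [p1c]; omega)]
      simp only [pac, p1c, p2c]; omega
    · rw [if_neg (fun hc => h ((symm_apply_iff t.1 i i₀).mp hc)), if_neg h, padd_sub_left]
  · funext i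
    simp only [ract, onev]
    rw [hmax, padd_sub]

lemma gmul_shift (t : Gel n) (R : ℕ+) :
    gmul (1, constv (R+1), onev) (gmul t (1, onev, constv (R+1))) =
      (t.1, fun i => t.2.1 i + R, fun i => t.2.2 i + R) := by
  have h1 : gmul t (1, onev, constv (R+1)) =
      (t.1, t.2.1, fun i => t.2.2 i + R) := by
    unfold gmul
    refine Prod.ext ?_ (Prod.ext ?_ ?_)
    · simp
    · funext i
      simp only [ract_one, onev]
      rw [pmax_one, padd_sub]
    · funext i
      simp only [ract_one, onev, constv]
      rw [pmax_one]
      apply pq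
      rw [psub_coe _ _ (by simp only [pac, p1c]; have := ppos R; have := ppos (t.2.2 i); omega)]
      simp only [pac, p1c]; omega
  rw [h1]
  unfold gmul
  refine Prod.ext ?_ (Prod.ext ?_ ?_)
  · simp
  · funext i
    simp only [ract, onev, constv]
    rw [pmax_one']
    apply pq
    rw [psub_coe _ _ (by simp only [pac, p1c]; have := ppos R; have := ppos (t.2.1 i); omega)]
    simp only [pac, p1c]; omega
  · funext i
    simp only [ract, onev]
    rw [pmax_one', padd_sub]

end GelD

namespace GelD

variable {n : ℕ}

lemma pk1 (k : ℕ+) : k ≤ k + 1 := by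
  rw [← PNat.coe_le_coe, pac, p1c]; omega

lemma pnot_le {a N : ℕ+} (h : ¬ (N + 1 ≤ a)) : a ≤ N := by
  rw [← PNat.coe_le_coe] at h ⊢
  rw [pac, p1c] at h
  omega

lemma gmul_eleft (w : Fin n → ℕ+) (t : Gel n) :
    gmul (1, w, w) t =
      (t.1, fun i => max (w (t.1.symm i)) (t.2.1 i),
       fun i => t.2.2 i + max (w (t.1.symm i)) (t.2.1 i) - t.2.1 i) := by
  unfold gmul
  refine Prod.ext ?_ (Prod.ext ?_ ?_)
  · simp
  · funext i
    simp only [ract]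
    rw [padd_sub_left]
  · funext i
    simp only [ract]

lemma gmul_eright (w : Fin n → ℕ+) (t : Gel n) :
    gmul t (1, w, w) =
      (t.1, fun i => t.2.1 i + max (t.2.2 i) (w i) - t.2.2 i,
       fun i => max (t.2.2 i) (w i)) := by
  unfold gmul
  refine Prod.ext ?_ (Prod.ext ?_ ?_)
  · simp
  · funext i
    simp only [ract_one]
  · funext i
    simp only [ract_one]
    rw [padd_sub_left]

lemma crit_left (k : ℕ+) (i₀ : Fin n) (t : Gel n) :
    gmul (eK k) t = gmul (eKi k i₀) t ↔ k + 1 ≤ t.2.1 (t.1 i₀) := by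
  unfold eK eKi
  rw [gmul_eleft, gmul_eleft]
  constructor
  · intro h
    have h2 := congrFun (congrArg (fun z : Gel n => z.2.1) h) (t.1 i₀)
    simp only [constv, bumpK, Equiv.symm_apply_apply, if_pos] at h2
    by_contra hc
    have hle : t.2.1 (t.1 i₀) ≤ k := pnot_le hc
    rw [max_eq_left hle, max_eq_left (le_trans hle (pk1 k))] at h2
    have : (k:ℕ) = (k:ℕ)+1 := by exact_mod_cast h2
    omega
  · intro hk
    have hmax : ∀ i, max (constv k (t.1.symm i)) (t.2.1 i)
        = max (bumpK k i₀ (t.1.symm i)) (t.2.1 i) := by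
      intro i
      simp only [constv, bumpK]
      by_cases h : t.1.symm i = i₀
      · rw [if_pos h]
        have hi : i = t.1 i₀ := (symm_apply_iff t.1 i i₀).mp h
        have hki : k ≤ t.2.1 i := by
          rw [hi]; exact le_trans (pk1 k) hk
        have hki' : k + 1 ≤ t.2.1 i := by rw [hi]; exact hk
        rw [max_eq_right hki, max_eq_right hki']
      · rw [if_neg h]
    simp only [hmax]

lemma crit_right (k : ℕ+) (i₀ : Fin n) (t : Gel n) :
    gmul t (eK k) = gmul t (eKi k i₀) ↔ k + 1 ≤ t.2.2 i₀ := by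
  unfold eK eKi
  rw [gmul_eright, gmul_eright]
  constructor
  · intro h
    have h2 := congrFun (congrArg (fun z : Gel n => z.2.2) h) i₀
    simp only [constv, bumpK, if_pos] at h2
    by_contra hc
    have hle : t.2.2 i₀ ≤ k := pnot_le hc
    rw [max_eq_right hle, max_eq_right (le_trans hle (pk1 k))] at h2
    have : (k:ℕ) = (k:ℕ)+1 := by exact_mod_cast h2
    omega
  · intro hk
    have hmax : ∀ i, max (t.2.2 i) (constv k i)
        = max (t.2.2 i) (bumpK k i₀ i) := by
      intro i
      simp only [constv, bumpK]
      by_cases h : i = i₀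
      · rw [if_pos h]
        have hki : k ≤ t.2.2 i := by
          rw [h]; exact le_trans (pk1 k) hk
        have hki' : k + 1 ≤ t.2.2 i := by rw [h]; exact hk
        rw [max_eq_left hki, max_eq_left hki']
      · rw [if_neg h]
    simp only [hmax]

/-! ### the box and its finiteness -/

def box (B : ℕ+) : Set (Gel n) := {t | ∀ i, t.2.1 i ≤ B ∧ t.2.2 i ≤ B}

lemma box_finite (B : ℕ+) : (box B : Set (Gel n)).Finite := by
  have hP : ({u : Fin n → ℕ+ | ∀ i, u i ≤ B}).Finite := by
    refine (Set.Finite.pi (fun _ : Fin n => Set.finite_Iic B)).subset ?_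
    intro u hu
    exact fun i _ => hu i
  refine ((Set.finite_univ (α := Equiv.Perm (Fin n))).prod (hP.prod hP)).subset ?_
  rintro ⟨σ, u, v⟩ ht
  refine ⟨Set.mem_univ _, ⟨?_, ?_⟩⟩
  · intro i; exact (ht i).1
  · intro i; exact (ht i).2

end GelD

namespace GelD

variable {n : ℕ}

section Topology

variable [TopologicalSpace (Option (Gel n))] [T2Space (Option (Gel n))]

lemma isOpen_singleton_some
    (hsep : ∀ a : Option (Gel n),
      Continuous (fun x => gmul0 a x) ∧ Continuous (fun x => gmul0 x a))
    (s : Gel n) : IsOpen ({some s} : Set (Option (Gel n))) := by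
  classical
  set m : ℕ := Finset.univ.sup (fun i => max (s.2.1 i : ℕ) (s.2.2 i)) with hm
  set N : ℕ+ := ⟨m + 1, Nat.succ_pos m⟩ with hN
  have hNc : (N:ℕ) = m + 1 := rfl
  have hsup : ∀ i, max (s.2.1 i : ℕ) (s.2.2 i) ≤ m := by
    intro i
    rw [hm]
    exact Finset.le_sup (f := fun i => max (s.2.1 i : ℕ) (s.2.2 i)) (Finset.mem_univ i)
  have hNu : ∀ i, s.2.1 i ≤ N := by
    intro i
    rw [← PNat.coe_le_coe, hNc]
    have h1 := le_trans (le_max_left (s.2.1 i : ℕ) (s.2.2 i)) (hsup i)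
    omega
  have hNv : ∀ i, s.2.2 i ≤ N := by
    intro i
    rw [← PNat.coe_le_coe, hNc]
    have h1 := le_trans (le_max_right (s.2.1 i : ℕ) (s.2.2 i)) (hsup i)
    omega
  set L : Fin n → Set (Option (Gel n)) := fun i₀ =>
    {x | gmul0 (some (eK N)) x ≠ gmul0 (some (eKi N i₀)) x} with hLdef
  set Rt : Fin n → Set (Option (Gel n)) := fun i₀ =>
    {x | gmul0 x (some (eK N)) ≠ gmul0 x (some (eKi N i₀))} with hRdef
  set Fset : Set (Option (Gel n)) := some '' (box N \ {s}) with hFdef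
  have hFfin : Fset.Finite := (((box_finite N).diff).image _)
  have key : ({some s} : Set (Option (Gel n))) =
      (⋂ i₀, L i₀) ∩ ((⋂ i₀, Rt i₀) ∩ (({none}ᶜ : Set (Option (Gel n))) ∩
        (⋂ x ∈ Fset, ({x}ᶜ : Set (Option (Gel n)))))) := by
    apply Set.Subset.antisymm
    · intro x hx
      rcases hx with rfl
      refine ⟨?_, ?_, ?_, ?_⟩
      · refine Set.mem_iInter.mpr (fun i₀ => ?_)
        intro hc
        have h1 : gmul (eK N) s = gmul (eKi N i₀) s := Option.some_injective _ hc
        have h2 := (crit_left N i₀ s).mp h1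
        have h3 := hNu (s.1 i₀)
        rw [← PNat.coe_le_coe, pac, p1c] at h2
        rw [← PNat.coe_le_coe] at h3
        omega
      · refine Set.mem_iInter.mpr (fun i₀ => ?_)
        intro hc
        have h1 : gmul s (eK N) = gmul s (eKi N i₀) := Option.some_injective _ hc
        have h2 := (crit_right N i₀ s).mp h1
        have h3 := hNv i₀
        rw [← PNat.coe_le_coe, pac, p1c] at h2
        rw [← PNat.coe_le_coe] at h3
        omega
      · simp
      · refine Set.mem_iInter₂.mpr (fun y hy => ?_)
        rcases hy with ⟨t, ⟨htb, hts⟩, rfl⟩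
        simp only [Set.mem_compl_iff, Set.mem_singleton_iff]
        intro hc
        exact hts (by simpa using hc.symm)
    · rintro x ⟨hL, hR, hnn, hF⟩
      match x with
      | none => exact absurd rfl hnn
      | some t =>
        have hu : ∀ j, t.2.1 j ≤ N := by
          intro j
          have h1 := Set.mem_iInter.mp hL (t.1.symm j)
          have h2 : ¬ (gmul (eK N) t = gmul (eKi N (t.1.symm j)) t) := by
            intro hc
            exact h1 (by rw [gmul0_ss, gmul0_ss, hc])
          have h3 := fun hc => h2 ((crit_left N (t.1.symm j) t).mpr hc)
          rw [Equiv.apply_symm_apply] at h3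
          exact pnot_le h3
        have hv : ∀ j, t.2.2 j ≤ N := by
          intro j
          have h1 := Set.mem_iInter.mp hR j
          have h2 : ¬ (gmul t (eK N) = gmul t (eKi N j)) := by
            intro hc
            exact h1 (by rw [gmul0_ss, gmul0_ss, hc])
          exact pnot_le (fun hc => h2 ((crit_right N j t).mpr hc))
        have htbox : t ∈ box N := fun i => ⟨hu i, hv i⟩
        by_contra hne
        have hts : t ≠ s := fun hc => hne (by rw [hc]; rfl)
        have : some t ∈ Fset := ⟨t, ⟨htbox, hts⟩, rfl⟩
        exact (Set.mem_iInter₂.mp hF (some t) this) rfl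
  rw [key]
  refine IsOpen.inter ?_ (IsOpen.inter ?_ (IsOpen.inter ?_ ?_))
  · refine isOpen_iInter_of_finite (fun i₀ => ?_)
    have hcl : IsClosed {x : Option (Gel n) |
        gmul0 (some (eK N)) x = gmul0 (some (eKi N i₀)) x} :=
      isClosed_eq (hsep (some (eK N))).1 (hsep (some (eKi N i₀))).1
    exact isOpen_compl_iff.mpr hcl
  · refine isOpen_iInter_of_finite (fun i₀ => ?_)
    have hcl : IsClosed {x : Option (Gel n) |
        gmul0 x (some (eK N)) = gmul0 x (some (eKi N i₀))} :=
      isClosed_eq (hsep (some (eK N))).2 (hsep (some (eKi N i₀))).2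
    exact isOpen_compl_iff.mpr hcl
  · exact isOpen_compl_singleton
  · exact hFfin.isOpen_biInter (fun _ _ => isOpen_compl_singleton)

end Topology

end GelD

namespace GelD

variable {n : ℕ}

def Safe (B : ℕ+) (t : Gel n) : Prop := ∃ i, B + 1 ≤ t.2.1 i ∨ B + 1 ≤ t.2.2 i

structure WalkHyp (T : Set (Gel n)) (B : ℕ+) : Prop where
  hA : ∀ (j : Fin n) (t : Gel n), t ∈ T → Safe B t → gmul t (1, onev, bumpv j) ∈ T
  hB : ∀ (j : Fin n) (t : Gel n), t ∈ T → Safe B t → gmul t (1, bumpv j, onev) ∈ T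
  hC : ∀ (i₀ : Fin n) (t : Gel n), t ∈ T → Safe B t → gmul (1, bumpv i₀, onev) t ∈ T
  hD : ∀ (i₀ : Fin n) (t : Gel n), t ∈ T → Safe B t → gmul (1, onev, bumpv i₀) t ∈ T
  hE : ∀ (δ : Equiv.Perm (Fin n)) (t : Gel n), t ∈ T → Safe B t →
        gmul t (δ, onev, onev) ∈ T
  hDeep : ∀ R : ℕ+, ∃ t ∈ T, ∀ i, R ≤ t.2.1 i ∧ R ≤ t.2.2 i

section Walk

variable {T : Set (Gel n)} {B : ℕ+}

lemma moveV1 (W : WalkHyp T B) (γ : Equiv.Perm (Fin n)) (u v : Fin n → ℕ+)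
    (j : Fin n) (w : ℕ+)
    (ht : (γ, u, v) ∈ T)
    (hs : ∀ c : ℕ+, min (v j) w ≤ c →
      Safe B (γ, u, fun i => if i = j then c else v i)) :
    (γ, u, fun i => if i = j then w else v i) ∈ T := by
  rcases le_total (v j) w with hle | hle
  · -- go up
    have aux : ∀ d : ℕ, ∀ w' : ℕ+, (w':ℕ) = (v j : ℕ) + d →
        (γ, u, fun i => if i = j then w' else v i) ∈ T := by
      intro d
      induction d with
      | zero =>
        intro w' hw'
        have hww : w' = v j := pq (by omega)
        have hfun : (fun i => if i = j then w' else v i) = v := by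
          funext i
          by_cases h : i = j
          · rw [if_pos h, hww, h]
          · rw [if_neg h]
        rw [hfun]
        exact ht
      | succ d ih =>
        intro w' hw'
        set w₀ : ℕ+ := ⟨(v j : ℕ) + d, by have := ppos (v j); omega⟩ with hw₀
        have hw₀c : (w₀:ℕ) = (v j : ℕ) + d := rfl
        have h₀ := ih w₀ rfl
        have hsafe : Safe B (γ, u, fun i => if i = j then w₀ else v i) := by
          apply hs
          apply le_trans (min_le_left _ _)
          rw [← PNat.coe_le_coe, hw₀c]
          omega
        have hmem := W.hA j _ h₀ hsafe
        rw [gmul_vup] at hmem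
        have hfun : (fun i => if i = j then
            (if i = j then w₀ else v i) + 1 else (if i = j then w₀ else v i))
            = (fun i => if i = j then w' else v i) := by
          funext i
          by_cases h : i = j
          · rw [if_pos h, if_pos h, if_pos h]
            apply pq
            rw [pac, p1c, hw₀c]
            omega
          · rw [if_neg h, if_neg h, if_neg h]
        rw [← hfun]
        exact hmem
    refine aux ((w:ℕ) - (v j : ℕ)) w ?_
    have := (PNat.coe_le_coe _ _).mpr hle
    omega
  · -- go down
    have aux : ∀ d : ℕ, ∀ c : ℕ+, (c:ℕ) + d = (v j : ℕ) → w ≤ c →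
        (γ, u, fun i => if i = j then c else v i) ∈ T := by
      intro d
      induction d with
      | zero =>
        intro c hc hwc
        have hcv : c = v j := pq (by omega)
        have hfun : (fun i => if i = j then c else v i) = v := by
          funext i
          by_cases h : i = j
          · rw [if_pos h, hcv, h]
          · rw [if_neg h]
        rw [hfun]
        exact ht
      | succ d ih =>
        intro c hc hwc
        set c' : ℕ+ := c + 1 with hc'
        have hc'c : (c':ℕ) = (c:ℕ) + 1 := rfl
        have h₀ := ih c' (by rw [hc'c]; omega)
          (le_trans hwc (by rw [← PNat.coe_le_coe, hc'c]; omega))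
        have hsafe : Safe B (γ, u, fun i => if i = j then c' else v i) := by
          apply hs
          apply le_trans (min_le_right _ _)
          apply le_trans hwc
          rw [← PNat.coe_le_coe, hc'c]
          omega
        have hmem := W.hB j _ h₀ hsafe
        have hval : (2:ℕ+) ≤ (if j = j then c' else v j) := by
          rw [if_pos rfl, ← PNat.coe_le_coe, hc'c, p2c]
          have := ppos c
          omega
        rw [gmul_vdn (γ, u, fun i => if i = j then c' else v i) j hval] at hmem
        have hfun : (fun i => if i = j then
            (if i = j then c' else v i) - 1 else (if i = j then c' else v i))
            = (fun i => if i = j then c else v i) := by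
          funext i
          by_cases h : i = j
          · rw [if_pos h, if_pos h, if_pos h]
            apply pq
            rw [psub_coe _ _ (by rw [hc'c, p1c]; have := ppos c; omega)]
            rw [hc'c, p1c]
            omega
          · rw [if_neg h, if_neg h, if_neg h]
        rw [← hfun]
        exact hmem
    refine aux ((v j : ℕ) - (w:ℕ)) w ?_ le_rfl
    have := (PNat.coe_le_coe _ _).mpr hle
    omega

lemma moveU1 (W : WalkHyp T B) (γ : Equiv.Perm (Fin n)) (u v : Fin n → ℕ+)
    (j : Fin n) (w : ℕ+)
    (ht : (γ, u, v) ∈ T)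
    (hs : ∀ c : ℕ+, min (u j) w ≤ c →
      Safe B (γ, fun i => if i = j then c else u i, v)) :
    (γ, fun i => if i = j then w else u i, v) ∈ T := by
  rcases le_total (u j) w with hle | hle
  · -- go up
    have aux : ∀ d : ℕ, ∀ w' : ℕ+, (w':ℕ) = (u j : ℕ) + d →
        (γ, fun i => if i = j then w' else u i, v) ∈ T := by
      intro d
      induction d with
      | zero =>
        intro w' hw'
        have hww : w' = u j := pq (by omega)
        have hfun : (fun i => if i = j then w' else u i) = u := by
          funext i
          by_cases h : i = j
          · rw [if_pos h, hww, h]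
          · rw [if_neg h]
        rw [hfun]
        exact ht
      | succ d ih =>
        intro w' hw'
        set w₀ : ℕ+ := ⟨(u j : ℕ) + d, by have := ppos (u j); omega⟩ with hw₀
        have hw₀c : (w₀:ℕ) = (u j : ℕ) + d := rfl
        have h₀ := ih w₀ rfl
        have hsafe : Safe B (γ, (fun i => if i = j then w₀ else u i), v) := by
          apply hs
          apply le_trans (min_le_left _ _)
          rw [← PNat.coe_le_coe, hw₀c]
          omega
        have hmem := W.hC (γ.symm j) _ h₀ hsafe
        rw [gmul_uup] at hmem
        simp only [Equiv.apply_symm_apply] at hmem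
        have hfun : (fun i => if i = j then
            (if i = j then w₀ else u i) + 1 else (if i = j then w₀ else u i))
            = (fun i => if i = j then w' else u i) := by
          funext i
          by_cases h : i = j
          · rw [if_pos h, if_pos h, if_pos h]
            apply pq
            rw [pac, p1c, hw₀c]
            omega
          · rw [if_neg h, if_neg h, if_neg h]
        rw [← hfun]
        exact hmem
    refine aux ((w:ℕ) - (u j : ℕ)) w ?_
    have := (PNat.coe_le_coe _ _).mpr hle
    omega
  · -- go down
    have aux : ∀ d : ℕ, ∀ c : ℕ+, (c:ℕ) + d = (u j : ℕ) → w ≤ c →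
        (γ, fun i => if i = j then c else u i, v) ∈ T := by
      intro d
      induction d with
      | zero =>
        intro c hc hwc
        have hcv : c = u j := pq (by omega)
        have hfun : (fun i => if i = j then c else u i) = u := by
          funext i
          by_cases h : i = j
          · rw [if_pos h, hcv, h]
          · rw [if_neg h]
        rw [hfun]
        exact ht
      | succ d ih =>
        intro c hc hwc
        set c' : ℕ+ := c + 1 with hc'
        have hc'c : (c':ℕ) = (c:ℕ) + 1 := rfl
        have h₀ := ih c' (by rw [hc'c]; omega)
          (le_trans hwc (by rw [← PNat.coe_le_coe, hc'c]; omega))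
        have hsafe : Safe B (γ, (fun i => if i = j then c' else u i), v) := by
          apply hs
          apply le_trans (min_le_right _ _)
          apply le_trans hwc
          rw [← PNat.coe_le_coe, hc'c]
          omega
        have hmem := W.hD (γ.symm j) _ h₀ hsafe
        have hval : (2:ℕ+) ≤ (if γ (γ.symm j) = j then c' else u (γ (γ.symm j))) := by
          rw [Equiv.apply_symm_apply, if_pos rfl, ← PNat.coe_le_coe, hc'c, p2c]
          have := ppos c
          omega
        rw [gmul_udn (γ, fun i => if i = j then c' else u i, v) (γ.symm j) hval] at hmem
        simp only [Equiv.apply_symm_apply] at hmem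
        have hfun : (fun i => if i = j then
            (if i = j then c' else u i) - 1 else (if i = j then c' else u i))
            = (fun i => if i = j then c else u i) := by
          funext i
          by_cases h : i = j
          · rw [if_pos h, if_pos h, if_pos h]
            apply pq
            rw [psub_coe _ _ (by rw [hc'c, p1c]; have := ppos c; omega)]
            rw [hc'c, p1c]
            omega
          · rw [if_neg h, if_neg h, if_neg h]
        rw [← hfun]
        exact hmem
    refine aux ((u j : ℕ) - (w:ℕ)) w ?_ le_rfl
    have := (PNat.coe_le_coe _ _).mpr hle
    omega

lemma moveVF (W : WalkHyp T B) (γ : Equiv.Perm (Fin n)) (u v v' : Fin n → ℕ+)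
    (F : Finset (Fin n))
    (ht : (γ, u, v) ∈ T)
    (hs : ∀ w : Fin n → ℕ+, (∀ i, i ∉ F → w i = v i) →
      (∀ i ∈ F, min (v i) (v' i) ≤ w i) → Safe B (γ, u, w)) :
    (γ, u, fun i => if i ∈ F then v' i else v i) ∈ T := by
  classical
  revert hs
  induction F using Finset.induction_on with
  | empty =>
    intro hs
    simpa using ht
  | @insert j F' hjF' ih =>
    intro hs
    have hsF' : ∀ w : Fin n → ℕ+, (∀ i, i ∉ F' → w i = v i) →
        (∀ i ∈ F', min (v i) (v' i) ≤ w i) → Safe B (γ, u, w) := by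
      intro w hoff hbd
      refine hs w ?_ ?_
      · intro i hi
        exact hoff i (fun hiF' => hi (Finset.mem_insert_of_mem hiF'))
      · intro i hi
        rcases Finset.mem_insert.mp hi with rfl | hiF'
        · rw [hoff i hjF']
          exact min_le_left _ _
        · exact hbd i hiF'
    have hF' := ih hsF'
    have hbj : (fun i => if i ∈ F' then v' i else v i) j = v j := by
      simp only [if_neg hjF']
    have hstep := moveV1 W γ u (fun i => if i ∈ F' then v' i else v i) j (v' j) hF' ?_
    · have hfun : (fun i => if i = j then v' j
          else (fun i => if i ∈ F' then v' i else v i) i)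
          = (fun i => if i ∈ insert j F' then v' i else v i) := by
        funext i
        by_cases h : i = j
        · subst h
          rw [if_pos rfl, if_pos (Finset.mem_insert_self i F')]
        · rw [if_neg h]
          by_cases h2 : i ∈ F'
          · simp only [if_pos h2, if_pos (Finset.mem_insert_of_mem h2)]
          · have : i ∉ insert j F' := by
              intro hc
              rcases Finset.mem_insert.mp hc with rfl | hc2
              · exact h rfl
              · exact h2 hc2
            simp only [if_neg h2, if_neg this]
      rw [← hfun]
      exact hstep
    · intro c hc
      rw [if_neg hjF'] at hc
      refine hs (fun i => if i = j then c else (fun i => if i ∈ F' then v' i else v i) i) ?_ ?_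
      · intro i hi
        have hij : i ≠ j := fun hc2 => hi (hc2 ▸ Finset.mem_insert_self j F')
        have hiF' : i ∉ F' := fun hc2 => hi (Finset.mem_insert_of_mem hc2)
        simp only [if_neg hij, if_neg hiF']
      · intro i hi
        rcases Finset.mem_insert.mp hi with rfl | hiF'
        · simp only [if_pos rfl]
          exact hc
        · by_cases hij : i = j
          · subst hij
            exact absurd hiF' hjF'
          · simp only [if_neg hij, if_pos hiF']
            exact min_le_right _ _

lemma moveUF (W : WalkHyp T B) (γ : Equiv.Perm (Fin n)) (u v u' : Fin n → ℕ+)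
    (F : Finset (Fin n))
    (ht : (γ, u, v) ∈ T)
    (hs : ∀ w : Fin n → ℕ+, (∀ i, i ∉ F → w i = u i) →
      (∀ i ∈ F, min (u i) (u' i) ≤ w i) → Safe B (γ, w, v)) :
    (γ, fun i => if i ∈ F then u' i else u i, v) ∈ T := by
  classical
  revert hs
  induction F using Finset.induction_on with
  | empty =>
    intro hs
    simpa using ht
  | @insert j F' hjF' ih =>
    intro hs
    have hsF' : ∀ w : Fin n → ℕ+, (∀ i, i ∉ F' → w i = u i) →
        (∀ i ∈ F', min (u i) (u' i) ≤ w i) → Safe B (γ, w, v) := by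
      intro w hoff hbd
      refine hs w ?_ ?_
      · intro i hi
        exact hoff i (fun hiF' => hi (Finset.mem_insert_of_mem hiF'))
      · intro i hi
        rcases Finset.mem_insert.mp hi with rfl | hiF'
        · rw [hoff i hjF']
          exact min_le_left _ _
        · exact hbd i hiF'
    have hF' := ih hsF'
    have hbj : (fun i => if i ∈ F' then u' i else u i) j = u j := by
      simp only [if_neg hjF']
    have hstep := moveU1 W γ (fun i => if i ∈ F' then u' i else u i) v j (u' j) hF' ?_
    · have hfun : (fun i => if i = j then u' j
          else (fun i => if i ∈ F' then u' i else u i) i)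
          = (fun i => if i ∈ insert j F' then u' i else u i) := by
        funext i
        by_cases h : i = j
        · subst h
          rw [if_pos rfl, if_pos (Finset.mem_insert_self i F')]
        · rw [if_neg h]
          by_cases h2 : i ∈ F'
          · simp only [if_pos h2, if_pos (Finset.mem_insert_of_mem h2)]
          · have : i ∉ insert j F' := by
              intro hc
              rcases Finset.mem_insert.mp hc with rfl | hc2
              · exact h rfl
              · exact h2 hc2
            simp only [if_neg h2, if_neg this]
      rw [← hfun]
      exact hstep
    · intro c hc
      rw [if_neg hjF'] at hc
      refine hs (fun i => if i = j then c else (fun i => if i ∈ F' then u' i else u i) i) ?_ ?_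
      · intro i hi
        have hij : i ≠ j := fun hc2 => hi (hc2 ▸ Finset.mem_insert_self j F')
        have hiF' : i ∉ F' := fun hc2 => hi (Finset.mem_insert_of_mem hc2)
        simp only [if_neg hij, if_neg hiF']
      · intro i hi
        rcases Finset.mem_insert.mp hi with rfl | hiF'
        · simp only [if_pos rfl]
          exact hc
        · by_cases hij : i = j
          · subst hij
            exact absurd hiF' hjF'
          · simp only [if_neg hij, if_pos hiF']
            exact min_le_right _ _

lemma reach (W : WalkHyp T B) (s : Gel n) (hsafe : Safe B s) : s ∈ T := by
  classical
  obtain ⟨j0, hj0⟩ := hsafe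
  obtain ⟨γ, p, q⟩ := s
  set mR : ℕ := Finset.univ.sup (fun i => max (p i : ℕ) (q i)) with hmR
  set R : ℕ+ := ⟨(B:ℕ) + 1 + mR + 1, by omega⟩ with hRdef
  have hRc : (R:ℕ) = (B:ℕ) + 1 + mR + 1 := rfl
  have hBR : B + 1 ≤ R := by
    rw [← PNat.coe_le_coe, pac, p1c, hRc]
    omega
  have hsupp : ∀ i, max (p i : ℕ) (q i) ≤ mR := by
    intro i
    rw [hmR]
    exact Finset.le_sup (f := fun i => max (p i : ℕ) (q i)) (Finset.mem_univ i)
  have hRp : ∀ i, p i ≤ R := by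
    intro i
    rw [← PNat.coe_le_coe, hRc]
    have := le_trans (le_max_left (p i : ℕ) (q i)) (hsupp i)
    omega
  have hRq : ∀ i, q i ≤ R := by
    intro i
    rw [← PNat.coe_le_coe, hRc]
    have := le_trans (le_max_right (p i : ℕ) (q i)) (hsupp i)
    omega
  obtain ⟨t₀, ht₀, hd₀⟩ := W.hDeep R
  have hsafe₀ : Safe B t₀ := ⟨j0, Or.inl (le_trans hBR (hd₀ j0).1)⟩
  have ht₁ := W.hE (γ * t₀.1⁻¹) t₀ ht₀ hsafe₀
  rw [gmul_perm] at ht₁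
  rw [inv_mul_cancel_right γ t₀.1] at ht₁
  set u₁ : Fin n → ℕ+ := fun i => t₀.2.1 ((γ * t₀.1⁻¹).symm i) with hu₁def
  set v₁ : Fin n → ℕ+ := fun i => t₀.2.2 ((γ * t₀.1⁻¹).symm i) with hv₁def
  have hu₁ : ∀ i, R ≤ u₁ i := fun i => (hd₀ _).1
  have hv₁ : ∀ i, R ≤ v₁ i := fun i => (hd₀ _).2
  -- ht₁ : (γ, u₁, v₁) ∈ T
  rcases hj0 with hp | hq
  · -- distinguished coordinate in the u-part
    -- first move all v-coordinates to q (safety from u₁)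
    have step1 := moveVF W γ u₁ v₁ q Finset.univ ht₁ (by
      intro w _ _
      exact ⟨j0, Or.inl (le_trans hBR (hu₁ j0))⟩)
    have hv1q : (fun i => if i ∈ Finset.univ then q i else v₁ i) = q := by
      funext i
      rw [if_pos (Finset.mem_univ i)]
    rw [hv1q] at step1
    -- then move the u-coordinates other than j0 to p
    have step2 := moveUF W γ u₁ q p (Finset.univ.erase j0) step1 (by
      intro w hoff _
      refine ⟨j0, Or.inl ?_⟩
      show B + 1 ≤ w j0
      rw [hoff j0 (Finset.notMem_erase j0 _)]
      exact le_trans hBR (hu₁ j0))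
    -- finally move coordinate j0 of u to p j0
    have step3 := moveU1 W γ
      (fun i => if i ∈ Finset.univ.erase j0 then p i else u₁ i) q j0 (p j0) step2 (by
      intro c hc
      have hbj : (fun i => if i ∈ Finset.univ.erase j0 then p i else u₁ i) j0 = u₁ j0 := by
        simp only [if_neg (Finset.notMem_erase j0 Finset.univ)]
      rw [if_neg (Finset.notMem_erase j0 Finset.univ)] at hc
      refine ⟨j0, Or.inl ?_⟩
      show B + 1 ≤ (if j0 = j0 then c
        else (fun i => if i ∈ Finset.univ.erase j0 then p i else u₁ i) j0)
      rw [if_pos rfl]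
      exact le_trans (le_min (le_trans hBR (hu₁ j0)) hp) hc)
    have hfin : (fun i => if i = j0 then p j0
        else (fun i => if i ∈ Finset.univ.erase j0 then p i else u₁ i) i) = p := by
      funext i
      by_cases h : i = j0
      · subst h
        rw [if_pos rfl]
      · rw [if_neg h]
        show (if i ∈ Finset.univ.erase j0 then p i else u₁ i) = p i
        rw [if_pos (Finset.mem_erase_of_ne_of_mem h (Finset.mem_univ i))]
    rw [hfin] at step3
    exact step3
  · -- distinguished coordinate in the v-part
    have step1 := moveUF W γ u₁ v₁ p Finset.univ ht₁ (by
      intro w _ _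
      exact ⟨j0, Or.inr (le_trans hBR (hv₁ j0))⟩)
    have hu1p : (fun i => if i ∈ Finset.univ then p i else u₁ i) = p := by
      funext i
      rw [if_pos (Finset.mem_univ i)]
    rw [hu1p] at step1
    have step2 := moveVF W γ p v₁ q (Finset.univ.erase j0) step1 (by
      intro w hoff _
      refine ⟨j0, Or.inr ?_⟩
      show B + 1 ≤ w j0
      rw [hoff j0 (Finset.notMem_erase j0 _)]
      exact le_trans hBR (hv₁ j0))
    have step3 := moveV1 W γ p
      (fun i => if i ∈ Finset.univ.erase j0 then q i else v₁ i) j0 (q j0) step2 (by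
      intro c hc
      have hbj : (fun i => if i ∈ Finset.univ.erase j0 then q i else v₁ i) j0 = v₁ j0 := by
        simp only [if_neg (Finset.notMem_erase j0 Finset.univ)]
      rw [if_neg (Finset.notMem_erase j0 Finset.univ)] at hc
      refine ⟨j0, Or.inr ?_⟩
      show B + 1 ≤ (if j0 = j0 then c
        else (fun i => if i ∈ Finset.univ.erase j0 then q i else v₁ i) j0)
      rw [if_pos rfl]
      exact le_trans (le_min (le_trans hBR (hv₁ j0)) hq) hc)
    have hfin : (fun i => if i = j0 then q j0
        else (fun i => if i ∈ Finset.univ.erase j0 then q i else v₁ i) i) = q := by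
      funext i
      by_cases h : i = j0
      · subst h
        rw [if_pos rfl]
      · rw [if_neg h]
        show (if i ∈ Finset.univ.erase j0 then q i else v₁ i) = q i
        rw [if_pos (Finset.mem_erase_of_ne_of_mem h (Finset.mem_univ i))]
    rw [hfin] at step3
    exact step3

end Walk

end GelD


namespace GelD

variable {n : ℕ}

lemma exists_bound (E : Set (Gel n)) (hE : E.Finite) :
    ∃ B : ℕ+, ∀ t ∈ E, ∀ i, t.2.1 i ≤ B ∧ t.2.2 i ≤ B := by
  classical
  set f : Gel n → ℕ := fun t => Finset.univ.sup (fun i => max (t.2.1 i : ℕ) (t.2.2 i)) with hf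
  obtain ⟨M, hM⟩ := (hE.image f).bddAbove
  refine ⟨⟨M + 1, Nat.succ_pos M⟩, ?_⟩
  intro t ht i
  have hfM : f t ≤ M := hM (Set.mem_image_of_mem f ht)
  have h1 : max (t.2.1 i : ℕ) (t.2.2 i) ≤ f t :=
    Finset.le_sup (f := fun i => max (t.2.1 i : ℕ) (t.2.2 i)) (Finset.mem_univ i)
  constructor
  · apply (PNat.coe_le_coe _ _).mp
    show (t.2.1 i : ℕ) ≤ M + 1
    have := le_trans (le_max_left (t.2.1 i : ℕ) (t.2.2 i)) h1
    omega
  · apply (PNat.coe_le_coe _ _).mp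
    show (t.2.2 i : ℕ) ≤ M + 1
    have := le_trans (le_max_right (t.2.1 i : ℕ) (t.2.2 i)) h1
    omega

section Topology2

variable [TopologicalSpace (Option (Gel n))] [T2Space (Option (Gel n))]

lemma compact_no_none_finite
    (hsep : ∀ a : Option (Gel n),
      Continuous (fun x => gmul0 a x) ∧ Continuous (fun x => gmul0 x a))
    (Q : Set (Option (Gel n))) (hQ : IsCompact Q) (hnone : none ∉ Q) : Q.Finite := by
  have hcov : Q ⊆ ⋃ t : Gel n, ({some t} : Set (Option (Gel n))) := by
    intro x hx
    match x with
    | none => exact absurd hx hnone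
    | some t => exact Set.mem_iUnion.mpr ⟨t, rfl⟩
  obtain ⟨F, hF⟩ := hQ.elim_finite_subcover
    (fun t : Gel n => ({some t} : Set (Option (Gel n))))
    (fun t => isOpen_singleton_some hsep t) hcov
  exact (F.finite_toSet.biUnion (fun t _ => Set.finite_singleton (some t))).subset hF

end Topology2

end GelD

open GelD

/-- The main theorem (dichotomy): a Hausdorff locally compact semitopological
topology on `S⁰ = (𝒮ₙ ⋉ (ℕ×ℕ)ⁿ)⁰` is either discrete, or it is the compact
one-point compactification topology: every point of `S` is isolated and the
open sets containing the zero are exactly the cofinite ones. -/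
theorem dichotomy {n : ℕ} [TopologicalSpace (Option (Gel n))]
    [T2Space (Option (Gel n))] [LocallyCompactSpace (Option (Gel n))]
    (hsep : ∀ a : Option (Gel n),
      Continuous (fun x => gmul0 a x) ∧ Continuous (fun x => gmul0 x a)) :
    DiscreteTopology (Option (Gel n)) ∨
      (CompactSpace (Option (Gel n)) ∧
       (∀ s : Gel n, IsOpen ({some s} : Set (Option (Gel n)))) ∧
       (∀ U : Set (Option (Gel n)), none ∈ U → (IsOpen U ↔ (Uᶜ).Finite))) := by
  classical
  have hiso : ∀ s : Gel n, IsOpen ({some s} : Set (Option (Gel n))) :=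
    fun s => isOpen_singleton_some hsep s
  by_cases hd : IsOpen ({none} : Set (Option (Gel n)))
  · left
    rw [discreteTopology_iff_isOpen_singleton]
    intro a
    match a with
    | none => exact hd
    | some s => exact hiso s
  · right
    obtain ⟨K, hKcomp, hKnhds⟩ := exists_compact_mem_nhds (none : Option (Gel n))
    have hKfin : ∀ W : Set (Option (Gel n)), IsOpen W → none ∈ W → (K \ W).Finite := by
      intro W hWo hWn
      exact compact_no_none_finite hsep _ (hKcomp.diff hWo) (fun hc => hc.2 hWn)
    set T : Set (Gel n) := {t | some t ∈ K} with hTdef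
    have hTinf : T.Infinite := by
      by_contra hfin
      rw [Set.not_infinite] at hfin
      have himfin : (some '' T).Finite := hfin.image _
      have hset : ({none} : Set (Option (Gel n))) = interior K \ (some '' T) := by
        apply Set.Subset.antisymm
        · intro x hx
          rcases hx with rfl
          refine ⟨mem_interior_iff_mem_nhds.mpr hKnhds, ?_⟩
          rintro ⟨t, _, hc⟩
          exact absurd hc (Option.some_ne_none t)
        · rintro x ⟨hxi, hxn⟩
          match x with
          | none => rfl
          | some t =>
            exact absurd ⟨t, (interior_subset hxi : some t ∈ K), rfl⟩ hxn
      exact hd (hset ▸ isOpen_interior.sdiff himfin.isClosed)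
    have hbad : ∀ a b : Gel n, {t : Gel n | t ∈ T ∧ gmul a (gmul t b) ∉ T}.Finite := by
      intro a b
      have hcont : Continuous
          (fun x : Option (Gel n) => gmul0 (some a) (gmul0 x (some b))) :=
        (hsep (some a)).1.comp (hsep (some b)).2
      have hpre_o : IsOpen ((fun x : Option (Gel n) =>
          gmul0 (some a) (gmul0 x (some b))) ⁻¹' interior K) :=
        isOpen_interior.preimage hcont
      have hpre_n : (none : Option (Gel n)) ∈
          ((fun x : Option (Gel n) => gmul0 (some a) (gmul0 x (some b))) ⁻¹' interior K) := by
        show gmul0 (some a) (gmul0 none (some b)) ∈ interior K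
        rw [gmul0_none_left, gmul0_none_right]
        exact mem_interior_iff_mem_nhds.mpr hKnhds
      have hfin := hKfin _ hpre_o hpre_n
      refine (hfin.preimage (fun x _ y _ h => Option.some_injective _ h)).subset ?_
      rintro t ⟨htT, htprod⟩
      refine ⟨htT, ?_⟩
      intro hc
      apply htprod
      have h2 : gmul0 (some a) (gmul0 (some t) (some b)) ∈ interior K := hc
      rw [gmul0_ss, gmul0_ss] at h2
      exact (interior_subset h2 : some (gmul a (gmul t b)) ∈ K)
    set Ebad : Set (Gel n) :=
      ((((⋃ j, {t | t ∈ T ∧ gmul oneG (gmul t (1, onev, bumpv j)) ∉ T}) ∪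
      (⋃ j, {t | t ∈ T ∧ gmul oneG (gmul t (1, bumpv j, onev)) ∉ T})) ∪
      (⋃ j, {t | t ∈ T ∧ gmul (1, bumpv j, onev) (gmul t oneG) ∉ T})) ∪
      (⋃ j, {t | t ∈ T ∧ gmul (1, onev, bumpv j) (gmul t oneG) ∉ T})) ∪
      (⋃ δ : Equiv.Perm (Fin n), {t | t ∈ T ∧ gmul oneG (gmul t (δ, onev, onev)) ∉ T})
      with hEdef
    have hEfin : Ebad.Finite :=
      (((((Set.finite_iUnion (fun j => hbad _ _)).union
        (Set.finite_iUnion (fun j => hbad _ _))).union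
        (Set.finite_iUnion (fun j => hbad _ _))).union
        (Set.finite_iUnion (fun j => hbad _ _))).union
        (Set.finite_iUnion (fun δ => hbad _ _)))
    obtain ⟨B, hB⟩ := exists_bound Ebad hEfin
    have hsafe_not : ∀ t : Gel n, Safe B t → t ∉ Ebad := by
      intro t hs hmem
      obtain ⟨i, hi⟩ := hs
      have hbi := hB t hmem i
      rcases hi with h | h
      · have h1 := hbi.1
        rw [← PNat.coe_le_coe] at h h1
        rw [pac, p1c] at h
        omega
      · have h1 := hbi.2
        rw [← PNat.coe_le_coe] at h h1
        rw [pac, p1c] at h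
        omega
    have W : WalkHyp T B := by
      constructor
      · intro j t ht hs
        by_contra hc
        refine hsafe_not t hs ?_
        refine Set.mem_union_left _ (Set.mem_union_left _
          (Set.mem_union_left _ (Set.mem_union_left _ ?_)))
        exact Set.mem_iUnion.mpr ⟨j, ht, by rwa [one_gmul]⟩
      · intro j t ht hs
        by_contra hc
        refine hsafe_not t hs ?_
        refine Set.mem_union_left _ (Set.mem_union_left _
          (Set.mem_union_left _ (Set.mem_union_right _ ?_)))
        exact Set.mem_iUnion.mpr ⟨j, ht, by rwa [one_gmul]⟩
      · intro j t ht hs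
        by_contra hc
        refine hsafe_not t hs ?_
        refine Set.mem_union_left _ (Set.mem_union_left _ (Set.mem_union_right _ ?_))
        exact Set.mem_iUnion.mpr ⟨j, ht, by rwa [gmul_one]⟩
      · intro j t ht hs
        by_contra hc
        refine hsafe_not t hs ?_
        refine Set.mem_union_left _ (Set.mem_union_right _ ?_)
        exact Set.mem_iUnion.mpr ⟨j, ht, by rwa [gmul_one]⟩
      · intro δ t ht hs
        by_contra hc
        refine hsafe_not t hs ?_
        refine Set.mem_union_right _ ?_
        exact Set.mem_iUnion.mpr ⟨δ, ht, by rwa [one_gmul]⟩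
      · intro R
        have hbadR := hbad (1, constv (R+1), onev) (1, onev, constv (R+1))
        obtain ⟨t₀, ht₀⟩ := (hTinf.diff hbadR).nonempty
        have ht₀T : t₀ ∈ T := ht₀.1
        have hprod : gmul (1, constv (R+1), onev)
            (gmul t₀ (1, onev, constv (R+1))) ∈ T := by
          by_contra hc
          exact ht₀.2 ⟨ht₀T, hc⟩
        rw [gmul_shift] at hprod
        refine ⟨(t₀.1, fun i => t₀.2.1 i + R, fun i => t₀.2.2 i + R), hprod, ?_⟩
        intro i
        constructor
        · rw [← PNat.coe_le_coe, pac]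
          have := ppos (t₀.2.1 i)
          omega
        · rw [← PNat.coe_le_coe, pac]
          have := ppos (t₀.2.2 i)
          omega
    have hTcfin : (Tᶜ : Set (Gel n)).Finite := by
      refine (box_finite B).subset ?_
      intro t htc i
      constructor
      · by_contra hc
        refine htc (reach W t ⟨i, Or.inl ?_⟩)
        rw [← PNat.coe_le_coe] at hc ⊢
        rw [pac, p1c]
        omega
      · by_contra hc
        refine htc (reach W t ⟨i, Or.inr ?_⟩)
        rw [← PNat.coe_le_coe] at hc ⊢
        rw [pac, p1c]
        omega
    have hopen_cof : ∀ U : Set (Option (Gel n)), none ∈ U → IsOpen U → (Uᶜ).Finite := by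
      intro U hnU hUo
      have h1 : (K \ U).Finite := hKfin U hUo hnU
      have h2 : (some '' (Tᶜ : Set (Gel n))).Finite := hTcfin.image _
      refine (h1.union h2).subset ?_
      intro x hx
      match x with
      | none => exact absurd hnU hx
      | some t =>
        by_cases htT : t ∈ T
        · exact Or.inl ⟨htT, hx⟩
        · exact Or.inr ⟨t, htT, rfl⟩
    refine ⟨?_, hiso, ?_⟩
    · constructor
      apply isCompact_of_finite_subcover
      intro ι U hUo hcover
      have hnone : (none : Option (Gel n)) ∈ ⋃ i, U i := hcover (Set.mem_univ none)
      obtain ⟨i₀, hi₀⟩ := Set.mem_iUnion.mp hnone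
      have hfin : ((U i₀)ᶜ).Finite := hopen_cof _ hi₀ (hUo i₀)
      have hch : ∀ x : Option (Gel n), ∃ i, x ∈ U i := fun x =>
        Set.mem_iUnion.mp (hcover (Set.mem_univ x))
      choose f hf using hch
      refine ⟨insert i₀ (hfin.toFinset.image f), ?_⟩
      intro x _
      by_cases hx : x ∈ U i₀
      · exact Set.mem_biUnion (Finset.mem_insert_self i₀ _) hx
      · refine Set.mem_biUnion (Finset.mem_insert_of_mem ?_) (hf x)
        exact Finset.mem_image_of_mem f (hfin.mem_toFinset.mpr hx)
    · intro U hnU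
      constructor
      · intro h
        exact hopen_cof U hnU h
      · intro h
        rw [← isClosed_compl_iff]
        exact h.isClosed
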